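/- Let G, H be groupoids, X : Hᵒᵖ × G ⥤ Type an (H,G)-bi-set, and η₀ an object of H. There is a bijection between the colimit in Type of the G-set X(η₀, -) : G ⥤ Type and the set of connected components of the homotopy fiber over η₀ of the projection q : GXH ⥤ H from the double translation groupoid. -/

import Mathlib

open CategoryTheory Opposite

universe w v₁ v₂ u₁ u₂

variable {G : Type u₁} {H : Type u₂} [Groupoid.{v₁} G] [Groupoid.{v₂} H]

namespace BiSet

variable (X : Hᵒᵖ × G ⥤ Type w)

/-- The left action `x ↦ g • x` of a bi-set `X : Hᵒᵖ × G ⥤ Type`. -/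
def lAct {γ γ' : G} (g : γ ⟶ γ') (η : H) : X.obj (op η, γ) → X.obj (op η, γ') :=
  X.map ((𝟙 (op η), g) : (op η, γ) ⟶ (op η, γ'))

/-- The right action `x ↦ x • h` of a bi-set `X : Hᵒᵖ × G ⥤ Type`. -/
def rAct {η' η : H} (h : η' ⟶ η) (γ : G) : X.obj (op η, γ) → X.obj (op η', γ) :=
  X.map ((h.op, 𝟙 γ) : (op η, γ) ⟶ (op η', γ))

variable {X}

theorem lAct_id {γ : G} (η : H) (x : X.obj (op η, γ)) : lAct X (𝟙 γ) η x = x := by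
  exact Functor.map_id_apply X (op η, γ) x

theorem rAct_id {η : H} (γ : G) (x : X.obj (op η, γ)) : rAct X (𝟙 η) γ x = x := by
  exact Functor.map_id_apply X (op η, γ) x

theorem lAct_comp {γ γ' γ'' : G} (g : γ ⟶ γ') (g' : γ' ⟶ γ'') (η : H)
    (x : X.obj (op η, γ)) : lAct X (g ≫ g') η x = lAct X g' η (lAct X g η x) := by
  unfold lAct
  rw [← Functor.map_comp_apply]
  congr 2; rw [prod_comp]; simp only [Category.id_comp]

theorem rAct_comp {η η' η'' : H} (h : η ⟶ η') (h' : η' ⟶ η'') (γ : G)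
    (x : X.obj (op η'', γ)) : rAct X (h ≫ h') γ x = rAct X h γ (rAct X h' γ x) := by
  unfold rAct
  rw [← Functor.map_comp_apply]
  congr 2; rw [prod_comp]; simp only [Category.id_comp, op_comp]

theorem lAct_rAct {γ γ' : G} {η' η : H} (g : γ ⟶ γ') (h : η' ⟶ η) (x : X.obj (op η, γ)) :
    lAct X g η' (rAct X h γ x) = rAct X h γ' (lAct X g η x) := by
  unfold lAct rAct
  rw [← Functor.map_comp_apply, ← Functor.map_comp_apply]
  congr 2; rw [prod_comp]; simp

end BiSet

/-- Objects of the double translation groupoid `GXH` of a bi-set `X : Hᵒᵖ × G ⥤ Type`: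
triples `(γ, x, η)` with `x ∈ X(η, γ)`. -/
structure DoubleTranslation (X : Hᵒᵖ × G ⥤ Type w) where
  γ : G
  η : H
  x : X.obj (op η, γ)

namespace DoubleTranslation

variable {X : Hᵒᵖ × G ⥤ Type w}

/-- The double translation groupoid: morphisms `a ⟶ b` are pairs `(g, h)` with
`g : a.γ ⟶ b.γ`, `h : a.η ⟶ b.η` and `g • a.x = b.x • h`. -/
instance : Category (DoubleTranslation X) where
  Hom a b := {p : (a.γ ⟶ b.γ) × (a.η ⟶ b.η) //
      BiSet.lAct X p.1 a.η a.x = BiSet.rAct X p.2 b.γ b.x}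
  id a := ⟨(𝟙 a.γ, 𝟙 a.η), by rw [BiSet.lAct_id, BiSet.rAct_id]⟩
  comp {a b c} f g := ⟨(f.1.1 ≫ g.1.1, f.1.2 ≫ g.1.2), by
    rw [BiSet.lAct_comp, f.2, BiSet.lAct_rAct, g.2, ← BiSet.rAct_comp]⟩
  id_comp f := by apply Subtype.ext; dsimp; simp
  comp_id f := by apply Subtype.ext; dsimp; simp
  assoc f g h := by apply Subtype.ext; dsimp; simp

/-- The projection `q : GXH ⥤ H` of the double translation groupoid. -/
def toH (X : Hᵒᵖ × G ⥤ Type w) : DoubleTranslation X ⥤ H where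
  obj a := a.η
  map f := f.1.2
  map_id _ := rfl
  map_comp _ _ := rfl

end DoubleTranslation

/-- The relation on `Σ c, T c` whose quotient is the colimit of `T` in `Type`. -/
def ColimRel {C : Type u} [Category.{v} C] (T : C ⥤ Type w) :
    (Σ c : C, T.obj c) → (Σ c : C, T.obj c) → Prop :=
  fun x y => ∃ g : x.1 ⟶ y.1, T.map g x.2 = y.2

section Proof

variable (X : Hᵒᵖ × G ⥤ Type w) (η₀ : H)

private def fwd0 (p : Σ γ : G, ((Functor.curry.obj X).obj (op η₀)).obj γ) :
    StructuredArrow η₀ (DoubleTranslation.toH X) :=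
  StructuredArrow.mk (Y := (⟨p.1, η₀, p.2⟩ : DoubleTranslation X)) (𝟙 η₀)

private def bwd0 (s : StructuredArrow η₀ (DoubleTranslation.toH X)) :
    Σ γ : G, ((Functor.curry.obj X).obj (op η₀)).obj γ :=
  ⟨s.right.γ, BiSet.rAct X s.hom s.right.γ s.right.x⟩

private theorem bwd_hom {s t : StructuredArrow η₀ (DoubleTranslation.toH X)} (f : s ⟶ t) :
    ColimRel ((Functor.curry.obj X).obj (op η₀)) (bwd0 X η₀ s) (bwd0 X η₀ t) := by
  refine ⟨f.right.1.1, ?_⟩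
  have hw : s.hom ≫ f.right.1.2 = t.hom := by
    simpa [DoubleTranslation.toH] using f.w
  show BiSet.lAct X f.right.1.1 η₀ (BiSet.rAct X s.hom s.right.γ s.right.x)
      = BiSet.rAct X t.hom t.right.γ t.right.x
  erw [BiSet.lAct_rAct]
  erw [f.right.2]
  erw [← BiSet.rAct_comp, hw]
  rfl

private theorem bwd_sound {s t : StructuredArrow η₀ (DoubleTranslation.toH X)}
    (h : Zigzag s t) :
    Quot.mk (ColimRel ((Functor.curry.obj X).obj (op η₀))) (bwd0 X η₀ s)
      = Quot.mk _ (bwd0 X η₀ t) := by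
  induction h with
  | refl => rfl
  | tail _ hz ih =>
    refine ih.trans ?_
    rcases hz with ⟨⟨f⟩⟩ | ⟨⟨f⟩⟩
    · exact Quot.sound (bwd_hom X η₀ f)
    · exact (Quot.sound (bwd_hom X η₀ f)).symm

end Proof

/-- The colimit in `Type` of the `G`-set `X(η₀, -)` is in bijection with the set of connected
components of the homotopy fiber over `η₀` of the projection `q : GXH ⥤ H` from the double
translation groupoid. -/
theorem colimit_equiv_connectedComponents_homotopyFiber (X : Hᵒᵖ × G ⥤ Type w) (η₀ : H) :
    Nonempty (Quot (ColimRel ((Functor.curry.obj X).obj (op η₀))) ≃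
      ConnectedComponents (StructuredArrow η₀ (DoubleTranslation.toH X))) := by
  constructor
  refine
    { toFun := Quot.lift (fun p => Quotient.mk _ (fwd0 X η₀ p)) ?_
      invFun := Quotient.lift (fun s => Quot.mk _ (bwd0 X η₀ s))
        (fun s t h => bwd_sound X η₀ h)
      left_inv := ?_
      right_inv := ?_ }
  · rintro ⟨γ, x⟩ ⟨γ', y⟩ ⟨g, hg⟩
    refine Quotient.sound (Zigzag.of_hom (StructuredArrow.homMk
      (⟨(g, 𝟙 η₀), ?_⟩ : (⟨γ, η₀, x⟩ : DoubleTranslation X) ⟶ ⟨γ', η₀, y⟩) ?_))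
    · show BiSet.lAct X g η₀ x = BiSet.rAct X (𝟙 η₀) γ' y
      rw [BiSet.rAct_id]
      exact hg
    · simp [DoubleTranslation.toH, fwd0]
  · refine Quot.ind ?_
    rintro ⟨γ, x⟩
    show Quot.mk _ (bwd0 X η₀ (fwd0 X η₀ ⟨γ, x⟩)) = _
    have : bwd0 X η₀ (fwd0 X η₀ ⟨γ, x⟩) = ⟨γ, x⟩ := by
      simp only [bwd0, fwd0, StructuredArrow.mk_hom_eq_self]
      exact congrArg _ (BiSet.rAct_id γ x)
    rw [this]
  · refine Quotient.ind ?_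
    intro s
    refine Quotient.sound (Zigzag.of_hom (StructuredArrow.homMk
      (⟨(𝟙 s.right.γ, s.hom), ?_⟩ :
        (fwd0 X η₀ (bwd0 X η₀ s)).right ⟶ s.right) ?_))
    · show BiSet.lAct X (𝟙 s.right.γ) η₀ (BiSet.rAct X s.hom s.right.γ s.right.x)
        = BiSet.rAct X s.hom s.right.γ s.right.x
      exact BiSet.lAct_id η₀ _
    · simp [DoubleTranslation.toH, fwd0]
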